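/- For two points v, w in Euclidean d-space lying outside the closed unit ball, the spherical caps {s ∈ S : ⟨v,s⟩ ≥ 1} and {s ∈ S : ⟨w,s⟩ ≥ 1} on the unit sphere S have disjoint interiors if and only if the closed segment [v,w] intersects the closed unit ball. -/

import Mathlib

open scoped RealInnerProductSpace

theorem stmt8 (d : ℕ) (v w : EuclideanSpace ℝ (Fin d))
    (hv : 1 < ‖v‖) (hw : 1 < ‖w‖) :
    -- the caps of v and w on the unit sphere have disjoint interiors
    (¬ ∃ s : EuclideanSpace ℝ (Fin d), ‖s‖ = 1 ∧ 1 < ⟪v, s⟫ ∧ 1 < ⟪w, s⟫) ↔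
      -- iff the segment [v,w] meets the closed unit ball
      (segment ℝ v w ∩ Metric.closedBall 0 1).Nonempty := by
  rw [not_iff_comm]
  constructor
  · -- no point of the segment in the ball → such an s exists
    intro hne
    have hball : ∀ x ∈ segment ℝ v w, 1 < ‖x‖ := by
      intro x hx
      by_contra h
      exact hne ⟨x, hx, by simpa [Metric.mem_closedBall, dist_eq_norm] using le_of_not_gt h⟩
    -- take the point of minimal norm on the segment
    have hcomp : IsCompact (segment ℝ v w) := by
      rw [segment_eq_image]
      exact isCompact_Icc.image (by continuity)
    obtain ⟨p, hp, hmin⟩ := hcomp.exists_isMinOn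
      ⟨v, left_mem_segment ℝ v w⟩ (continuous_norm.continuousOn)
    have hpn : 1 < ‖p‖ := hball p hp
    have hp0 : 0 < ‖p‖ := lt_trans one_pos hpn
    have key : ∀ u ∈ segment ℝ v w, ‖p‖ ^ 2 ≤ ⟪u, p⟫ := by
      intro u hu
      have hc : 0 ≤ ⟪p, u - p⟫ := by
        by_contra hcneg
        push_neg at hcneg
        set c : ℝ := ⟪p, u - p⟫ with hcdef
        have hqn : ∀ t : ℝ, 0 ≤ t → t ≤ 1 → ‖p‖ ≤ ‖p + t • (u - p)‖ := by
          intro t ht0 ht1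
          have hmem : p + t • (u - p) ∈ segment ℝ v w := by
            have := convex_segment v w hp hu (a := 1 - t) (b := t)
              (by linarith) ht0 (by ring)
            convert this using 1
            match_scalars <;> ring
          exact hmin hmem
        have hupn : 0 < ‖u - p‖ ^ 2 := by
          rcases eq_or_ne u p with h | h
          · rw [h] at hcdef
            simp [hcdef] at hcneg
          · have h0 : u - p ≠ 0 := sub_ne_zero.mpr h
            exact pow_pos (norm_pos_iff.mpr h0) 2
        set D : ℝ := ‖u - p‖ ^ 2 with hD
        set t : ℝ := min 1 (-c / D) with htdef
        have ht0 : 0 < t := lt_min one_pos (div_pos (by linarith) hupn)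
        have ht1 : t ≤ 1 := min_le_left _ _
        have hexp : ‖p + t • (u - p)‖ ^ 2 = ‖p‖ ^ 2 + 2 * t * c + t ^ 2 * D := by
          rw [norm_add_sq_real, real_inner_smul_right, norm_smul, hcdef, hD,
            mul_pow, Real.norm_eq_abs, sq_abs]
          ring
        have hineq : ‖p‖ ^ 2 ≤ ‖p + t • (u - p)‖ ^ 2 := by
          have := hqn t ht0.le ht1
          nlinarith [norm_nonneg p]
        rw [hexp] at hineq
        have h2 : 0 ≤ 2 * t * c + t ^ 2 * D := by linarith
        rcases le_or_gt (-c / D) 1 with hcase | hcase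
        · have hteq : t = -c / D := min_eq_right hcase
          have htD : t * D = -c := by
            rw [hteq]; field_simp
          have h3 : t ^ 2 * D = -(t * c) := by
            rw [pow_two, mul_assoc, htD]; ring
          rw [h3] at h2
          have : t * c < 0 := mul_neg_of_pos_of_neg ht0 hcneg
          linarith
        · have hteq : t = 1 := min_eq_left hcase.le
          rw [hteq] at h2
          have : D < -c := (one_lt_div hupn).mp hcase
          nlinarith
      have : ⟪p, u⟫ = ⟪p, u - p⟫ + ‖p‖ ^ 2 := by
        rw [inner_sub_right, real_inner_self_eq_norm_sq]; ring
      rw [real_inner_comm]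
      linarith
    refine ⟨‖p‖⁻¹ • p, ?_, ?_, ?_⟩
    · simp [norm_smul, abs_of_pos hp0, inv_mul_cancel₀ (ne_of_gt hp0)]
    · have := key v (left_mem_segment ℝ v w)
      rw [real_inner_smul_right]
      calc 1 < ‖p‖ := hpn
        _ = ‖p‖⁻¹ * ‖p‖ ^ 2 := by field_simp
        _ ≤ ‖p‖⁻¹ * ⟪v, p⟫ := by
            apply mul_le_mul_of_nonneg_left this (by positivity)
    · have := key w (right_mem_segment ℝ v w)
      rw [real_inner_smul_right]
      calc 1 < ‖p‖ := hpn
        _ = ‖p‖⁻¹ * ‖p‖ ^ 2 := by field_simp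
        _ ≤ ‖p‖⁻¹ * ⟪w, p⟫ := by
            apply mul_le_mul_of_nonneg_left this (by positivity)
  · -- such an s exists → no point of the segment in the ball
    rintro ⟨s, hs1, hvs, hws⟩ ⟨x, hx, hxb⟩
    obtain ⟨a, b, ha, hb, hab, rfl⟩ := hx
    have hxnorm : ‖a • v + b • w‖ ≤ 1 := by
      simpa [Metric.mem_closedBall, dist_eq_norm] using hxb
    have hinner : ⟪a • v + b • w, s⟫ = a * ⟪v, s⟫ + b * ⟪w, s⟫ := by
      rw [inner_add_left, real_inner_smul_left, real_inner_smul_left]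
    have hcs : ⟪a • v + b • w, s⟫ ≤ ‖a • v + b • w‖ * ‖s‖ := real_inner_le_norm _ _
    rw [hs1, mul_one] at hcs
    have h1 : 1 < a * ⟪v, s⟫ + b * ⟪w, s⟫ := by
      rcases eq_or_lt_of_le ha with h | h
      · have hb1 : b = 1 := by linarith
        rw [← h, hb1]; simpa using hws
      · nlinarith [mul_lt_mul_of_pos_left hvs h, mul_le_mul_of_nonneg_left hws.le hb]
    rw [hinner] at hcs
    linarith
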